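/- Let ε > 0 and a₀ ∈ ℝ, and define u(t) = 4ε·e^{3ε²t} + a₀²·(e^{3ε²t} − 1) and a(t) = 2·√ε·a₀/√(u(t)). Then for all t ≥ 0 (where u(t) ≥ 4ε > 0), a satisfies the amplitude equation a'(t) = −(3/8)·ε·a(t)·(a(t)² + 4ε) with initial value a(0) = a₀. -/

import Mathlib

/-- The multiple-scales amplitude
`a(t) = 2√ε·a₀/√(4ε·e^{3ε²t} + a₀²(e^{3ε²t} − 1))`
exactly solves `a' = −(3/8)εa(a² + 4ε)` with `a(0) = a₀`. -/
theorem stmt12 (ε a₀ : ℝ) (hε : 0 < ε) :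
    let u : ℝ → ℝ := fun t => 4*ε*Real.exp (3*ε^2*t) + a₀^2*(Real.exp (3*ε^2*t) - 1)
    let a : ℝ → ℝ := fun t => 2 * Real.sqrt ε * a₀ / Real.sqrt (u t)
    (∀ t : ℝ, 0 ≤ t → deriv a t = -(3/8) * ε * a t * ((a t)^2 + 4*ε)) ∧
    a 0 = a₀ := by
  intro u a
  have hse : Real.sqrt ε ^ 2 = ε := Real.sq_sqrt hε.le
  constructor
  · intro t ht
    have he : (1:ℝ) ≤ Real.exp (3*ε^2*t) := Real.one_le_exp (by positivity)
    have hupos : 0 < u t := by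
      simp only [u]
      nlinarith [sq_nonneg a₀]
    have hspos : 0 < Real.sqrt (u t) := Real.sqrt_pos.mpr hupos
    -- derivative of inner linear map
    have h1 : HasDerivAt (fun s : ℝ => 3*ε^2*s) (3*ε^2) t := by
      simpa using (hasDerivAt_id t).const_mul (3*ε^2)
    have hexp : HasDerivAt (fun s : ℝ => Real.exp (3*ε^2*s))
        (Real.exp (3*ε^2*t) * (3*ε^2)) t :=
      (Real.hasDerivAt_exp (3*ε^2*t)).comp t h1
    have hu' : HasDerivAt u
        (4*ε*(Real.exp (3*ε^2*t) * (3*ε^2)) + a₀^2*(Real.exp (3*ε^2*t) * (3*ε^2))) t := by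
      exact ((hexp.const_mul (4*ε)).add ((hexp.sub_const 1).const_mul (a₀^2)))
    have hsqrt : HasDerivAt (fun s => Real.sqrt (u s))
        (1 / (2 * Real.sqrt (u t)) *
          (4*ε*(Real.exp (3*ε^2*t) * (3*ε^2)) + a₀^2*(Real.exp (3*ε^2*t) * (3*ε^2)))) t :=
      (Real.hasDerivAt_sqrt hupos.ne').comp t hu'
    have ha : HasDerivAt a
        ((0 * Real.sqrt (u t) - (2 * Real.sqrt ε * a₀) *
          (1 / (2 * Real.sqrt (u t)) *
            (4*ε*(Real.exp (3*ε^2*t) * (3*ε^2)) + a₀^2*(Real.exp (3*ε^2*t) * (3*ε^2))))) /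
          (Real.sqrt (u t))^2) t :=
      (hasDerivAt_const t (2 * Real.sqrt ε * a₀)).div hsqrt hspos.ne'
    rw [ha.deriv]
    have hs2 : Real.sqrt (u t) ^ 2 = u t := Real.sq_sqrt hupos.le
    simp only [a]
    set s := Real.sqrt (u t) with hsdef
    set e := Real.exp (3*ε^2*t) with hedef
    have hueq : u t = 4*ε*e + a₀^2*(e - 1) := rfl
    rw [hueq] at hs2
    have hsne : s ≠ 0 := hspos.ne'
    field_simp
    linear_combination (24 * Real.sqrt ε * a₀ * ε^2) * hs2
      + (24 * Real.sqrt ε * a₀^3 * ε) * hse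
  · have h0 : u 0 = 4*ε := by simp [u]
    have h4 : Real.sqrt (4*ε) = 2 * Real.sqrt ε := by
      rw [show (4:ℝ)*ε = 2^2*ε by ring, Real.sqrt_mul (by positivity),
        Real.sqrt_sq (by norm_num : (0:ℝ) ≤ 2)]
    have hne : (2 : ℝ) * Real.sqrt ε ≠ 0 := by positivity
    simp only [a, h0, h4]
    field_simp
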